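/- Define A : 𝕆 → End_ℝ(𝕆 ⊕ 𝕆) by A(q)(x, y) = (q·y, −q̄·x). Then for all p, q ∈ 𝕆, A(p) ∘ A(q) + A(q) ∘ A(p) = −2⟨p,q⟩ · id. In particular A(q)² = −|q|² · id, so A induces a representation of the Clifford algebra Cl(ℝ⁸, −|·|²) on the 16-dimensional real vector space 𝕆 ⊕ 𝕆. -/

import Mathlib

noncomputable section

open Quaternion

/-- The octonions, realized via the Cayley–Dickson construction on the quaternions. -/
def Octonion : Type := ℍ[ℝ] × ℍ[ℝ]

namespace Octonion

instance : AddCommGroup Octonion := inferInstanceAs (AddCommGroup (ℍ[ℝ] × ℍ[ℝ]))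
instance : Module ℝ Octonion := inferInstanceAs (Module ℝ (ℍ[ℝ] × ℍ[ℝ]))

def fst (x : Octonion) : ℍ[ℝ] := Prod.fst (x : ℍ[ℝ] × ℍ[ℝ])
def snd (x : Octonion) : ℍ[ℝ] := Prod.snd (x : ℍ[ℝ] × ℍ[ℝ])
def mk (a b : ℍ[ℝ]) : Octonion := ((a, b) : ℍ[ℝ] × ℍ[ℝ])

/-- Cayley–Dickson multiplication. -/
instance : Mul Octonion :=
  ⟨fun x y => mk (fst x * fst y - star (snd y) * snd x) (snd y * fst x + snd x * star (fst y))⟩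

instance : One Octonion := ⟨mk 1 0⟩

/-- Octonionic conjugation. -/
def conj (x : Octonion) : Octonion := mk (star (fst x)) (-(snd x))

/-- Real part. -/
def re (x : Octonion) : ℝ := (fst x).re

/-- The Euclidean inner product ⟨p,q⟩ = Re(p q̄). -/
def inner (x y : Octonion) : ℝ := re (x * conj y)

/-- The squared norm |x|². -/
def normSq (x : Octonion) : ℝ := inner x x

/-- The standard basis e₀ = 1, e₁, …, e₇. -/
def e : Fin 8 → Octonion := fun i =>
  match i with
  | 0 => mk 1 0
  | 1 => mk ⟨0,1,0,0⟩ 0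
  | 2 => mk ⟨0,0,1,0⟩ 0
  | 3 => mk ⟨0,0,0,1⟩ 0
  | 4 => mk 0 1
  | 5 => mk 0 ⟨0,1,0,0⟩
  | 6 => mk 0 ⟨0,0,1,0⟩
  | 7 => mk 0 ⟨0,0,0,1⟩

/-- The associator [a,b,c] = (ab)c − a(bc). -/
def associator (a b c : Octonion) : Octonion := a * b * c - a * (b * c)

end Octonion


namespace Octonion
private lemma fst_mul' (x y : Octonion) : fst (x*y) = fst x * fst y - star (snd y) * snd x := rfl
private lemma snd_mul' (x y : Octonion) : snd (x*y) = snd y * fst x + snd x * star (fst y) := rfl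
private lemma fst_conj' (x : Octonion) : fst (conj x) = star (fst x) := rfl
private lemma snd_conj' (x : Octonion) : snd (conj x) = -(snd x) := rfl
private lemma fst_add' (x y : Octonion) : fst (x+y) = fst x + fst y := rfl
private lemma snd_add' (x y : Octonion) : snd (x+y) = snd x + snd y := rfl
private lemma fst_neg' (x : Octonion) : fst (-x) = -(fst x) := rfl
private lemma snd_neg' (x : Octonion) : snd (-x) = -(snd x) := rfl
private lemma fst_smul' (r : ℝ) (x : Octonion) : fst (r • x) = r • fst x := rfl
private lemma snd_smul' (r : ℝ) (x : Octonion) : snd (r • x) = r • snd x := rfl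
private lemma inner_def' (x y : Octonion) : inner x y = (fst x * star (fst y) + star (snd y) * snd x).re := by
  show (fst x * star (fst y) - star (-(snd y)) * snd x).re = _
  rw [star_neg, neg_mul, sub_neg_eq_add]
private lemma ext' {x y : Octonion} (h1 : fst x = fst y) (h2 : snd x = snd y) : x = y := Prod.ext h1 h2

private lemma mul_neg' (x y : Octonion) : x * (-y) = -(x * y) := by
  apply ext' <;>
    simp only [fst_mul', snd_mul', fst_neg', snd_neg', star_neg, mul_neg, neg_mul, neg_add,
      neg_sub, sub_neg_eq_add, neg_neg] <;> abel

set_option maxHeartbeats 1000000 in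
private lemma L1 (p q x : Octonion) : p * (conj q * x) + q * (conj p * x) = (2 * inner p q) • x := by
  apply ext' <;>
  · simp only [fst_add', snd_add', fst_mul', snd_mul', fst_conj', snd_conj', fst_smul', snd_smul',
      inner_def', star_neg, star_star, neg_neg]
    ext <;>
      simp only [Quaternion.re_mul, Quaternion.imI_mul, Quaternion.imJ_mul, Quaternion.imK_mul,
        Quaternion.re_add, Quaternion.imI_add, Quaternion.imJ_add, Quaternion.imK_add,
        Quaternion.re_sub, Quaternion.imI_sub, Quaternion.imJ_sub, Quaternion.imK_sub,
        Quaternion.re_neg, Quaternion.imI_neg, Quaternion.imJ_neg, Quaternion.imK_neg,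
        Quaternion.re_star, Quaternion.imI_star, Quaternion.imJ_star, Quaternion.imK_star,
        Quaternion.re_smul, Quaternion.imI_smul, Quaternion.imJ_smul, Quaternion.imK_smul,
        smul_eq_mul] <;> ring

set_option maxHeartbeats 1000000 in
private lemma L2 (p q x : Octonion) : conj p * (q * x) + conj q * (p * x) = (2 * inner p q) • x := by
  apply ext' <;>
  · simp only [fst_add', snd_add', fst_mul', snd_mul', fst_conj', snd_conj', fst_smul', snd_smul',
      inner_def', star_neg, star_star, neg_neg]
    ext <;>
      simp only [Quaternion.re_mul, Quaternion.imI_mul, Quaternion.imJ_mul, Quaternion.imK_mul,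
        Quaternion.re_add, Quaternion.imI_add, Quaternion.imJ_add, Quaternion.imK_add,
        Quaternion.re_sub, Quaternion.imI_sub, Quaternion.imJ_sub, Quaternion.imK_sub,
        Quaternion.re_neg, Quaternion.imI_neg, Quaternion.imJ_neg, Quaternion.imK_neg,
        Quaternion.re_star, Quaternion.imI_star, Quaternion.imJ_star, Quaternion.imK_star,
        Quaternion.re_smul, Quaternion.imI_smul, Quaternion.imJ_smul, Quaternion.imK_smul,
        smul_eq_mul] <;> ring
end Octonion

open Octonion in
/-- The Clifford representation map A(q)(x, y) = (q·y, −q̄·x). -/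
def cliffordMap (q : Octonion) : Octonion × Octonion → Octonion × Octonion :=
  fun v => (q * v.2, -(Octonion.conj q * v.1))

/-- A(p)∘A(q) + A(q)∘A(p) = −2⟨p,q⟩·id, and in particular A(q)² = −|q|²·id. -/
theorem cliffordMap_anticommutation :
    (∀ p q : Octonion,
      (fun v : Octonion × Octonion => cliffordMap p (cliffordMap q v) + cliffordMap q (cliffordMap p v)) =
        (fun v : Octonion × Octonion => (-(2 * Octonion.inner p q)) • v)) ∧
    (∀ q : Octonion,
      (fun v : Octonion × Octonion => cliffordMap q (cliffordMap q v)) =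
        (fun v : Octonion × Octonion => (-Octonion.normSq q) • v)) := by
  have main : ∀ p q : Octonion,
      (fun v : Octonion × Octonion => cliffordMap p (cliffordMap q v) + cliffordMap q (cliffordMap p v)) =
        (fun v : Octonion × Octonion => (-(2 * Octonion.inner p q)) • v) := by
    intro p q
    funext v
    show ((_ : Octonion), (_ : Octonion)) = _
    apply Prod.ext
    · show p * (-(Octonion.conj q * v.1)) + q * (-(Octonion.conj p * v.1))
        = (-(2 * Octonion.inner p q)) • v.1
      rw [Octonion.mul_neg', Octonion.mul_neg', ← neg_add, Octonion.L1, ← neg_smul]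
    · show -(Octonion.conj p * (q * v.2)) + -(Octonion.conj q * (p * v.2))
        = (-(2 * Octonion.inner p q)) • v.2
      rw [← neg_add, Octonion.L2, ← neg_smul]
  refine ⟨main, fun q => ?_⟩
  funext v
  have h := congrFun (main q q) v
  have h2 : (2:ℝ) • cliffordMap q (cliffordMap q v) = (-(2 * Octonion.inner q q)) • v := by
    rw [two_smul]; exact h
  have := congrArg (fun w => ((2:ℝ)⁻¹) • w) h2
  simp only [smul_smul] at this
  rw [show (2:ℝ)⁻¹ * 2 = 1 by norm_num, one_smul] at this
  rw [this]
  congr 1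
  show (2:ℝ)⁻¹ * (-(2 * Octonion.inner q q)) = -(Octonion.inner q q)
  ring
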